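/- arXiv:2001.01422 — 2 statements merged into one kernel-verified Lean document; each statement's English description precedes it below -/
import Mathlib

section
/- The map φ(m) = (m·|m|₂ - 1)/2, i.e., φ(m) = (m/2^{ν₂(m)} - 1)/2, is a bijection from {l+1, l+2, ..., 2l+1} to {0, 1, ..., l}, and for every m in the domain, τ₂(m) = τ₂(φ(m)) + 1. -/
def tau2 (n : ℕ) : ℕ := (Nat.digits 2 n).sum
def phi (m : ℕ) : ℕ := (m / 2 ^ padicValNat 2 m - 1) / 2

lemma tau2_odd (n : ℕ) : tau2 (2 * n + 1) = tau2 n + 1 := by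
  unfold tau2
  rw [Nat.digits_def' (by norm_num : 1 < 2) (by omega)]
  have h1 : (2 * n + 1) % 2 = 1 := by omega
  have h2 : (2 * n + 1) / 2 = n := by omega
  rw [h1, h2]
  simp [add_comm]

lemma tau2_two_mul (n : ℕ) (hn : 0 < n) : tau2 (2 * n) = tau2 n := by
  unfold tau2
  rw [Nat.digits_def' (by norm_num : 1 < 2) (by omega)]
  have h1 : (2 * n) % 2 = 0 := by omega
  have h2 : (2 * n) / 2 = n := by omega
  rw [h1, h2]
  simp

lemma tau2_pow_mul (k n : ℕ) (hn : 0 < n) : tau2 (2 ^ k * n) = tau2 n := by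
  induction k with
  | zero => simp
  | succ k ih =>
    have h : 2 ^ (k + 1) * n = 2 * (2 ^ k * n) := by ring
    rw [h, tau2_two_mul _ (by positivity), ih]

lemma rep (m : ℕ) (hm : 0 < m) : m = 2 ^ padicValNat 2 m * (2 * phi m + 1) := by
  have hdvd : 2 ^ padicValNat 2 m ∣ m := pow_padicValNat_dvd
  set v := padicValNat 2 m with hv
  set o := m / 2 ^ v with ho
  have h1 : 2 ^ v * o = m := Nat.mul_div_cancel' hdvd
  have hno : ¬ 2 ∣ o := by
    have := Nat.not_dvd_ordCompl Nat.prime_two hm.ne'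
    rwa [Nat.factorization_def m Nat.prime_two] at this
  have hop : 0 < o := by
    rcases Nat.eq_zero_or_pos o with h | h
    · omega
    · exact h
  have hphi : phi m = (o - 1) / 2 := rfl
  rw [hphi, ← h1]
  have h2 : ¬ (o % 2 = 0) := fun h => hno (Nat.dvd_of_mod_eq_zero h)
  congr 1
  omega

lemma val_pow_mul_odd (k n : ℕ) : padicValNat 2 (2 ^ k * (2 * n + 1)) = k := by
  haveI : Fact (Nat.Prime 2) := ⟨Nat.prime_two⟩
  rw [padicValNat.mul (by positivity) (by omega), padicValNat.prime_pow,
    padicValNat.eq_zero_of_not_dvd (by omega)]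
  omega

lemma phi_pow_mul (k n : ℕ) : phi (2 ^ k * (2 * n + 1)) = n := by
  unfold phi
  rw [val_pow_mul_odd, Nat.mul_div_cancel_left _ (pow_pos two_pos k)]
  omega

/-- `φ` is a bijection from `{l+1, …, 2l+1}` onto `{0, …, l}`, and it decreases
the binary digit sum by exactly one. -/
theorem phi_bijOn (l : ℕ) :
    Set.BijOn phi (Set.Icc (l + 1) (2 * l + 1)) (Set.Icc 0 l) ∧
    ∀ m ∈ Set.Icc (l + 1) (2 * l + 1), tau2 m = tau2 (phi m) + 1 := by
  constructor
  · refine ⟨?_, ?_, ?_⟩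
    · intro m hm
      simp only [Set.mem_Icc] at hm ⊢
      have hr := rep m (by omega)
      have h2 : 2 * phi m + 1 ≤ m := by
        conv_rhs => rw [hr]
        exact Nat.le_mul_of_pos_left _ (by positivity)
      omega
    · intro m1 hm1 m2 hm2 heq
      simp only [Set.mem_Icc] at hm1 hm2
      have hr1 := rep m1 (by omega)
      have hr2 := rep m2 (by omega)
      rw [heq] at hr1
      set v1 := padicValNat 2 m1
      set v2 := padicValNat 2 m2
      set o := 2 * phi m2 + 1 with hoo
      rcases le_total v1 v2 with h | h
      · have : m2 = 2 ^ (v2 - v1) * m1 := by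
          rw [hr2, hr1, ← mul_assoc, ← pow_add, Nat.sub_add_cancel h]
        rcases Nat.eq_zero_or_pos (v2 - v1) with h0 | h0
        · rw [h0] at this; simpa using this.symm
        · exfalso
          have h2 : 2 ≤ 2 ^ (v2 - v1) := by
            calc 2 = 2 ^ 1 := by norm_num
            _ ≤ 2 ^ (v2 - v1) := Nat.pow_le_pow_right (by norm_num) h0
          have h3 : 2 * m1 ≤ m2 := by
            rw [this]; exact Nat.mul_le_mul_right m1 h2
          omega
      · have : m1 = 2 ^ (v1 - v2) * m2 := by
          rw [hr1, hr2, ← mul_assoc, ← pow_add, Nat.sub_add_cancel h]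
        rcases Nat.eq_zero_or_pos (v1 - v2) with h0 | h0
        · rw [h0] at this; simpa using this
        · exfalso
          have h2 : 2 ≤ 2 ^ (v1 - v2) := by
            calc 2 = 2 ^ 1 := by norm_num
            _ ≤ 2 ^ (v1 - v2) := Nat.pow_le_pow_right (by norm_num) h0
          have h3 : 2 * m2 ≤ m1 := by
            rw [this]; exact Nat.mul_le_mul_right m2 h2
          omega
    · intro n hn
      simp only [Set.mem_Icc] at hn
      set o := 2 * n + 1 with ho
      set q := (2 * l + 1) / o with hq
      set k := Nat.log 2 q with hk
      have hop : 0 < o := by omega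
      have hole : o ≤ 2 * l + 1 := by omega
      have hq1 : 1 ≤ q := Nat.one_le_div_iff hop |>.mpr hole
      have hk1 : 2 ^ k ≤ q := Nat.pow_log_le_self 2 (by omega)
      have hk2 : q < 2 ^ (k + 1) := Nat.lt_pow_succ_log_self (by norm_num) q
      have hub : 2 ^ k * o ≤ 2 * l + 1 := by
        calc 2 ^ k * o ≤ q * o := Nat.mul_le_mul_right o hk1
          _ ≤ 2 * l + 1 := Nat.div_mul_le_self _ _
      have hlb : l + 1 ≤ 2 ^ k * o := by
        have hm := Nat.div_add_mod (2 * l + 1) o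
        have hmo : (2 * l + 1) % o < o := Nat.mod_lt _ hop
        have h1 : 2 * l + 1 < o * q + o := by
          obtain ⟨P, hP⟩ : ∃ P, o * q = P := ⟨_, rfl⟩
          rw [hP] at hm ⊢
          omega
        have h4 : 2 * l + 1 < 2 * (2 ^ k * o) := by
          calc 2 * l + 1 < o * q + o := h1
            _ = (q + 1) * o := by ring
            _ ≤ 2 ^ (k + 1) * o := Nat.mul_le_mul_right o (by omega)
            _ = 2 * (2 ^ k * o) := by ring
        obtain ⟨M, hM⟩ : ∃ M, 2 ^ k * o = M := ⟨_, rfl⟩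
        rw [hM] at h4 ⊢
        omega
      refine ⟨2 ^ k * o, ?_, ?_⟩
      · simp only [Set.mem_Icc]; omega
      · rw [ho]; exact phi_pow_mul k n
  · intro m hm
    simp only [Set.mem_Icc] at hm
    have hr := rep m (by omega)
    conv_lhs => rw [hr]
    rw [tau2_pow_mul _ _ (by omega), tau2_odd]
end

section
/- Let F be a finite field, u ∈ F nonzero with u ≠ 1, and let a_m = u^{τ₂(m-1)} be the coefficients of the generalised Thue-Morse series g_u over F. Then there exists an even positive integer n such that the 2×2 Hankel determinant a_n·a_{n+2} - a_{n+1}² vanishes; namely any n with ν₂(n) equal to the multiplicative order of u. -/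
lemma tau2_two_pow (d : ℕ) : tau2 (2 ^ d) = 1 := by
  induction d with
  | zero => simp [tau2]
  | succ d ih =>
    unfold tau2 at *
    have key : Nat.digits 2 (2^(d+1)) = (2^(d+1) % 2) :: Nat.digits 2 (2^(d+1)/2) :=
      Nat.digits_def' (by norm_num : 1 < 2) (by positivity)
    have hm : (2:ℕ)^(d+1) % 2 = 0 := by
      have : (2:ℕ)^(d+1) = 2 * 2^d := by ring
      omega
    have hv : (2:ℕ)^(d+1) / 2 = 2^d := by
      have : (2:ℕ)^(d+1) = 2 * 2^d := by ring
      omega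
    rw [key, hm, hv]
    simp only [List.sum_cons, ih]

lemma tau2_two_pow_sub_one (d : ℕ) : tau2 (2 ^ d - 1) = d := by
  induction d with
  | zero => simp [tau2]
  | succ d ih =>
    unfold tau2 at *
    have hp : (1:ℕ) ≤ 2 ^ d := Nat.one_le_two_pow
    have hp2 : (2:ℕ)^(d+1) = 2 * 2^d := by ring
    have key : Nat.digits 2 (2^(d+1) - 1)
        = ((2^(d+1) - 1) % 2) :: Nat.digits 2 ((2^(d+1) - 1)/2) :=
      Nat.digits_def' (by norm_num : 1 < 2) (by omega)
    have hm : ((2:ℕ)^(d+1) - 1) % 2 = 1 := by omega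
    have hv : ((2:ℕ)^(d+1) - 1) / 2 = 2^d - 1 := by omega
    rw [key, hm, hv]
    simp only [List.sum_cons, ih]
    omega

lemma tau2_two_pow_add_one (d : ℕ) (hd : 1 ≤ d) : tau2 (2 ^ d + 1) = 2 := by
  unfold tau2
  rw [Nat.digits_def' (by norm_num : 1 < 2) (by positivity)]
  have h2 : (2:ℕ) ∣ 2 ^ d := dvd_pow_self 2 (by omega)
  have h1 : (2 ^ d + 1) % 2 = 1 := by omega
  have h3 : (2 ^ d + 1) / 2 = 2 ^ (d - 1) := by
    have : (2:ℕ) ^ d = 2 * 2 ^ (d-1) := by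
      rw [← pow_succ']
      congr 1
      omega
    omega
  rw [h1, h3]
  have := tau2_two_pow (d - 1)
  unfold tau2 at this
  simp only [List.sum_cons, this]

/-- Over a finite field `F`, for `u ≠ 0, 1` and `a_m = u^{τ₂(m-1)}`, there exists an
even positive integer `n` (namely one with `ν₂(n) = ord(u)`) for which the 2×2
Hankel determinant `a_n·a_{n+2} - a_{n+1}²` vanishes. -/
theorem hankel_det_vanishes_finite_field
    (F : Type*) [Field F] [Fintype F] (u : F) (hu0 : u ≠ 0) (hu1 : u ≠ 1)
    (a : ℕ → F) (ha : ∀ m, a m = u ^ tau2 (m - 1)) :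
    ∃ n : ℕ, 0 < n ∧ Even n ∧ padicValNat 2 n = orderOf u ∧
      a n * a (n + 2) - a (n + 1) ^ 2 = 0 := by
  have hfin : IsOfFinOrder u := by
    rw [isOfFinOrder_iff_pow_eq_one]
    refine ⟨Fintype.card F - 1, ?_, FiniteField.pow_card_sub_one_eq_one u hu0⟩
    have h2 : 2 ≤ Fintype.card F := Fintype.one_lt_card
    omega
  set d := orderOf u with hd
  have hd1 : 1 ≤ d := hfin.orderOf_pos
  refine ⟨2 ^ d, by positivity, ?_, ?_, ?_⟩
  · exact (Nat.even_pow).mpr ⟨even_two, by omega⟩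
  · exact padicValNat.prime_pow d
  · have e1 : a (2 ^ d) = u ^ d := by
      rw [ha, tau2_two_pow_sub_one]
    have e2 : a (2 ^ d + 1) = u := by
      rw [ha]
      have : 2 ^ d + 1 - 1 = 2 ^ d := rfl
      rw [this, tau2_two_pow, pow_one]
    have e3 : a (2 ^ d + 2) = u ^ 2 := by
      rw [ha]
      have : 2 ^ d + 2 - 1 = 2 ^ d + 1 := rfl
      rw [this, tau2_two_pow_add_one d hd1]
    rw [e1, e2, e3, hd, pow_orderOf_eq_one]
    ring
end
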